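/- (Lemma 5.1, symmetric gradient case.) Let B ≥ 0 and let P, Q ∈ ℝ^{d×d} be symmetric positive definite matrices with ‖P − P⁻¹‖ ≤ B and ‖Q − Q⁻¹‖ ≤ B (Frobenius norm). Then ‖(P − P⁻¹) − (Q − Q⁻¹)‖ ≤ (1 + √d/(C^L)²) ‖P − Q‖, where C^L := −B/2 + √(4 + B²)/2. In other words, the gradient ∇f_G(X) = X − X⁻¹ of the symmetric gradient energy is locally Lipschitz on symmetric positive definite matrices with explicit constant F = 1 + √d/(C^L)². -/

import Mathlib

open Matrix

/-- Frobenius norm `‖X‖ = (trace(Xᵀ X))^{1/2}`. -/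
noncomputable def frobNorm {d : ℕ} (X : Matrix (Fin d) (Fin d) ℝ) : ℝ :=
  Real.sqrt (Matrix.trace (Xᵀ * X))

namespace GradLipAux

variable {d : ℕ}

lemma trace_transpose_mul_nonneg (X : Matrix (Fin d) (Fin d) ℝ) :
    0 ≤ Matrix.trace (Xᵀ * X) := by
  simp only [Matrix.trace, Matrix.diag, Matrix.mul_apply, Matrix.transpose_apply]
  exact Finset.sum_nonneg fun j _ => Finset.sum_nonneg fun i _ => mul_self_nonneg _

lemma frobNorm_nonneg (X : Matrix (Fin d) (Fin d) ℝ) : 0 ≤ frobNorm X :=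
  Real.sqrt_nonneg _

lemma frobNorm_sq (X : Matrix (Fin d) (Fin d) ℝ) :
    frobNorm X ^ 2 = Matrix.trace (Xᵀ * X) :=
  Real.sq_sqrt (trace_transpose_mul_nonneg X)

lemma trace_le_of_frobNorm_le {X : Matrix (Fin d) (Fin d) ℝ} {B : ℝ} (hB : 0 ≤ B)
    (h : frobNorm X ≤ B) : Matrix.trace (Xᵀ * X) ≤ B ^ 2 := by
  rw [← frobNorm_sq]
  exact pow_le_pow_left₀ (frobNorm_nonneg X) h 2

attribute [local instance] Matrix.frobeniusNormedAddCommGroup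

lemma frobNorm_eq_norm (X : Matrix (Fin d) (Fin d) ℝ) : frobNorm X = ‖X‖ := by
  rw [Matrix.frobenius_norm_def, frobNorm, Real.sqrt_eq_rpow]
  congr 1
  simp only [Matrix.trace, Matrix.diag, Matrix.mul_apply, Matrix.transpose_apply,
    Real.norm_eq_abs, Real.rpow_two, sq_abs]
  rw [Finset.sum_comm]
  simp [sq]

lemma frobNorm_add_le (X Y : Matrix (Fin d) (Fin d) ℝ) :
    frobNorm (X + Y) ≤ frobNorm X + frobNorm Y := by
  simp only [frobNorm_eq_norm]; exact norm_add_le _ _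

lemma trace_nonneg_of_posSemidef {M : Matrix (Fin d) (Fin d) ℝ} (h : M.PosSemidef) :
    0 ≤ Matrix.trace M := by
  refine Finset.sum_nonneg fun i _ => ?_
  exact h.diag_nonneg

lemma trace_conj_le {N : Matrix (Fin d) (Fin d) ℝ} {c : ℝ}
    (h : (c • (1 : Matrix (Fin d) (Fin d) ℝ) - N).PosSemidef)
    (Y : Matrix (Fin d) (Fin d) ℝ) :
    Matrix.trace (Y * N * Yᵀ) ≤ c * Matrix.trace (Y * Yᵀ) := by
  have h2 := h.mul_mul_conjTranspose_same Y
  rw [Matrix.conjTranspose_eq_transpose_of_trivial] at h2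
  have h3 := trace_nonneg_of_posSemidef h2
  have e : Y * (c • 1 - N) * Yᵀ = c • (Y * Yᵀ) - Y * N * Yᵀ := by
    rw [Matrix.mul_sub, Matrix.sub_mul, Matrix.mul_smul, Matrix.mul_one, Matrix.smul_mul]
  rw [e, Matrix.trace_sub, Matrix.trace_smul, smul_eq_mul] at h3
  linarith

lemma conj_mul {U : Matrix (Fin d) (Fin d) ℝ} (hUU : Uᵀ * U = 1) (ν ν' : Fin d → ℝ) :
    (U * diagonal ν * Uᵀ) * (U * diagonal ν' * Uᵀ)
      = U * diagonal (fun i => ν i * ν' i) * Uᵀ := by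
  have e : (U * diagonal ν * Uᵀ) * (U * diagonal ν' * Uᵀ)
      = U * (diagonal ν * (Uᵀ * U) * diagonal ν') * Uᵀ := by
    simp only [Matrix.mul_assoc]
  rw [e, hUU, Matrix.mul_one, Matrix.diagonal_mul_diagonal]

lemma trace_conj_sq {U : Matrix (Fin d) (Fin d) ℝ} (hUU : Uᵀ * U = 1) (ν : Fin d → ℝ) :
    Matrix.trace ((U * diagonal ν * Uᵀ)ᵀ * (U * diagonal ν * Uᵀ)) = ∑ i, ν i ^ 2 := by
  have ht : (U * diagonal ν * Uᵀ)ᵀ = U * diagonal ν * Uᵀ := by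
    simp [Matrix.transpose_mul, Matrix.diagonal_transpose, Matrix.mul_assoc]
  rw [ht, conj_mul hUU, Matrix.trace_mul_cycle, hUU, Matrix.one_mul, Matrix.trace_diagonal]
  simp [sq]

lemma exists_spectral {P : Matrix (Fin d) (Fin d) ℝ} (hP : P.PosDef) :
    ∃ (U : Matrix (Fin d) (Fin d) ℝ) (μ : Fin d → ℝ),
      Uᵀ * U = 1 ∧ U * Uᵀ = 1 ∧ (∀ i, 0 < μ i) ∧ P = U * Matrix.diagonal μ * Uᵀ := by
  have hH := hP.1
  refine ⟨(hH.eigenvectorUnitary : Matrix (Fin d) (Fin d) ℝ), hH.eigenvalues, ?_, ?_, hP.eigenvalues_pos, ?_⟩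
  · rw [← Matrix.conjTranspose_eq_transpose_of_trivial, ← Matrix.star_eq_conjTranspose]
    exact Matrix.mem_unitaryGroup_iff'.mp (hH.eigenvectorUnitary).2
  · rw [← Matrix.conjTranspose_eq_transpose_of_trivial, ← Matrix.star_eq_conjTranspose]
    exact Matrix.mem_unitaryGroup_iff.mp (hH.eigenvectorUnitary).2
  · have := hH.spectral_theorem
    rwa [RCLike.ofReal_real_eq_id, Function.id_comp, Unitary.conjStarAlgAut_apply, Matrix.star_eq_conjTranspose,
      Matrix.conjTranspose_eq_transpose_of_trivial] at this

end GradLipAux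

namespace GradLipAux

lemma C_pos {B : ℝ} (hB : 0 ≤ B) : 0 < -B / 2 + Real.sqrt (4 + B ^ 2) / 2 := by
  have h4 : (0:ℝ) ≤ 4 + B ^ 2 := by positivity
  have hs := Real.sq_sqrt h4
  have hnn := Real.sqrt_nonneg (4 + B ^ 2)
  nlinarith

lemma C_root {B : ℝ} :
    (-B / 2 + Real.sqrt (4 + B ^ 2) / 2) ^ 2 + B * (-B / 2 + Real.sqrt (4 + B ^ 2) / 2) = 1 := by
  have h4 : (0:ℝ) ≤ 4 + B ^ 2 := by positivity
  have hs := Real.sq_sqrt h4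
  nlinarith

lemma key_psd {B : ℝ} (hB : 0 ≤ B) {P : Matrix (Fin d) (Fin d) ℝ} (hP : P.PosDef)
    (h : frobNorm (P - P⁻¹) ≤ B) :
    (((-B / 2 + Real.sqrt (4 + B ^ 2) / 2)⁻¹ ^ 2) • (1 : Matrix (Fin d) (Fin d) ℝ)
      - P⁻¹ * P⁻¹).PosSemidef := by
  obtain ⟨U, μ, hUU, hUU', hμ, hPspec⟩ := exists_spectral hP
  obtain ⟨C, hCdef⟩ : ∃ C : ℝ, C = -B / 2 + Real.sqrt (4 + B ^ 2) / 2 := ⟨_, rfl⟩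
  rw [← hCdef]
  have hC : 0 < C := hCdef ▸ C_pos hB
  have hCroot : C ^ 2 + B * C = 1 := hCdef ▸ C_root
  have hPinv : P⁻¹ = U * diagonal (fun i => (μ i)⁻¹) * Uᵀ := by
    apply Matrix.inv_eq_right_inv
    rw [hPspec, conj_mul hUU]
    have e : (fun i => μ i * (μ i)⁻¹) = fun _ : Fin d => (1:ℝ) :=
      funext fun i => mul_inv_cancel₀ (hμ i).ne'
    rw [e, Matrix.diagonal_one, Matrix.mul_one, hUU']
  have hsub : P - P⁻¹ = U * diagonal (fun i => μ i - (μ i)⁻¹) * Uᵀ := by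
    rw [hPinv, hPspec, ← Matrix.sub_mul, ← Matrix.mul_sub, Matrix.diagonal_sub]
  have htr := trace_le_of_frobNorm_le hB h
  rw [hsub, trace_conj_sq hUU] at htr
  have hterm : ∀ i, (μ i - (μ i)⁻¹) ^ 2 ≤ B ^ 2 := fun i =>
    le_trans (Finset.single_le_sum (f := fun j => (μ j - (μ j)⁻¹) ^ 2) (fun j _ => sq_nonneg _) (Finset.mem_univ i)) htr
  have hCμ : ∀ i, C ≤ μ i := by
    intro i
    by_contra h'
    push_neg at h'
    have hm := hμ i
    have hu : 0 < (μ i)⁻¹ := inv_pos.mpr hm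
    have hmu : μ i * (μ i)⁻¹ = 1 := mul_inv_cancel₀ hm.ne'
    have h1 : C + B < (μ i)⁻¹ := by
      nlinarith [mul_pos hu (sub_pos.mpr h')]
    have h2 : B < (μ i)⁻¹ - μ i := by linarith
    have h3 : B ^ 2 < ((μ i)⁻¹ - μ i) ^ 2 := by nlinarith
    have h4 : ((μ i) - (μ i)⁻¹) ^ 2 = ((μ i)⁻¹ - μ i) ^ 2 := by ring
    have := hterm i
    rw [h4] at this
    linarith
  have hent : ∀ i, 0 ≤ C⁻¹ ^ 2 - (μ i)⁻¹ * (μ i)⁻¹ := by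
    intro i
    have h1 : (μ i)⁻¹ ≤ C⁻¹ := inv_anti₀ hC (hCμ i)
    have h2 : 0 ≤ (μ i)⁻¹ := (inv_pos.mpr (hμ i)).le
    nlinarith
  have e1 : P⁻¹ * P⁻¹ = U * diagonal (fun i => (μ i)⁻¹ * (μ i)⁻¹) * Uᵀ := by
    rw [hPinv, conj_mul hUU]
  have e2 : (C⁻¹ ^ 2) • (1 : Matrix (Fin d) (Fin d) ℝ)
      = U * diagonal (fun _ : Fin d => C⁻¹ ^ 2) * Uᵀ := by
    rw [← Matrix.smul_one_eq_diagonal, Matrix.mul_smul, Matrix.mul_one, Matrix.smul_mul, hUU']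
  have e3 : (C⁻¹ ^ 2) • (1 : Matrix (Fin d) (Fin d) ℝ) - P⁻¹ * P⁻¹
      = U * diagonal (fun i => C⁻¹ ^ 2 - (μ i)⁻¹ * (μ i)⁻¹) * Uᵀ := by
    rw [e1, e2, ← Matrix.sub_mul, ← Matrix.mul_sub, Matrix.diagonal_sub]
  rw [e3, ← Matrix.conjTranspose_eq_transpose_of_trivial U]
  exact (Matrix.posSemidef_diagonal_iff.mpr hent).mul_mul_conjTranspose_same U

end GradLipAux

/-- Lemma 5.1, symmetric gradient case: if `P`, `Q` are symmetric
positive definite with `‖P − P⁻¹‖ ≤ B` and `‖Q − Q⁻¹‖ ≤ B` (Frobenius norm), then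
the gradient `∇f_G(X) = X − X⁻¹` of the symmetric gradient energy satisfies
`‖(P − P⁻¹) − (Q − Q⁻¹)‖ ≤ (1 + √d/(C^L)²) ‖P − Q‖`, where
`C^L = −B/2 + √(4 + B²)/2` is the positive root of `x² + Bx − 1 = 0`. -/
theorem gradient_local_lipschitz_symmetric_gradient (d : ℕ) (B : ℝ) (hB : 0 ≤ B)
    (P Q : Matrix (Fin d) (Fin d) ℝ) (hP : P.PosDef) (hQ : Q.PosDef)
    (hPgrad : frobNorm (P - P⁻¹) ≤ B) (hQgrad : frobNorm (Q - Q⁻¹) ≤ B) :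
    frobNorm ((P - P⁻¹) - (Q - Q⁻¹)) ≤
      (1 + Real.sqrt d / (-B / 2 + Real.sqrt (4 + B ^ 2) / 2) ^ 2) * frobNorm (P - Q) := by
  rcases Nat.eq_zero_or_pos d with hd | hd
  · subst hd
    have hz : ∀ X : Matrix (Fin 0) (Fin 0) ℝ, frobNorm X = 0 := by
      intro X
      simp [frobNorm, Matrix.trace]
    rw [hz, hz]
    simp
  -- main case
  obtain ⟨C, hCdef⟩ : ∃ C : ℝ, C = -B / 2 + Real.sqrt (4 + B ^ 2) / 2 := ⟨_, rfl⟩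
  rw [← hCdef]
  have hC : 0 < C := hCdef ▸ GradLipAux.C_pos hB
  have hPpsd := hCdef ▸ GradLipAux.key_psd hB hP hPgrad
  have hQpsd := hCdef ▸ GradLipAux.key_psd hB hQ hQgrad
  set c : ℝ := C⁻¹ ^ 2 with hcdef
  have hc : 0 ≤ c := by positivity
  have hPt : P⁻¹ᵀ = P⁻¹ := by
    rw [Matrix.transpose_nonsing_inv]
    congr 1
    rw [← Matrix.conjTranspose_eq_transpose_of_trivial]
    exact hP.1
  have hQt : Q⁻¹ᵀ = Q⁻¹ := by
    rw [Matrix.transpose_nonsing_inv]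
    congr 1
    rw [← Matrix.conjTranspose_eq_transpose_of_trivial]
    exact hQ.1
  set A := P - Q with hAdef
  set M := P⁻¹ * A * Q⁻¹ with hMdef
  -- trace bound for M
  have e1 : Mᵀ * M = (Q⁻¹ * Aᵀ) * (P⁻¹ * P⁻¹) * (Q⁻¹ * Aᵀ)ᵀ := by
    simp only [hMdef, Matrix.transpose_mul, hPt, hQt, Matrix.transpose_transpose,
      Matrix.mul_assoc]
  have i1 : Matrix.trace (Mᵀ * M) ≤ c * Matrix.trace ((Q⁻¹ * Aᵀ) * (Q⁻¹ * Aᵀ)ᵀ) := by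
    rw [e1]
    exact GradLipAux.trace_conj_le hPpsd _
  have i2 : Matrix.trace ((Q⁻¹ * Aᵀ) * (Q⁻¹ * Aᵀ)ᵀ)
      = Matrix.trace (A * (Q⁻¹ * Q⁻¹) * Aᵀ) := by
    rw [Matrix.transpose_mul, Matrix.transpose_transpose, hQt, Matrix.trace_mul_comm]
    simp only [Matrix.mul_assoc]
  have i3 : Matrix.trace (A * (Q⁻¹ * Q⁻¹) * Aᵀ) ≤ c * Matrix.trace (A * Aᵀ) :=
    GradLipAux.trace_conj_le hQpsd A
  have i4 : Matrix.trace (Mᵀ * M) ≤ c ^ 2 * Matrix.trace (Aᵀ * A) := by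
    have h5 : Matrix.trace (A * Aᵀ) = Matrix.trace (Aᵀ * A) := Matrix.trace_mul_comm _ _
    calc Matrix.trace (Mᵀ * M) ≤ c * Matrix.trace ((Q⁻¹ * Aᵀ) * (Q⁻¹ * Aᵀ)ᵀ) := i1
      _ ≤ c * (c * Matrix.trace (A * Aᵀ)) := by
          rw [i2]; exact mul_le_mul_of_nonneg_left i3 hc
      _ = c ^ 2 * Matrix.trace (Aᵀ * A) := by rw [h5]; ring
  have hfM : frobNorm M ≤ c * frobNorm A := by
    rw [frobNorm, frobNorm]
    calc Real.sqrt (Matrix.trace (Mᵀ * M))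
        ≤ Real.sqrt (c ^ 2 * Matrix.trace (Aᵀ * A)) := Real.sqrt_le_sqrt i4
      _ = c * Real.sqrt (Matrix.trace (Aᵀ * A)) := by
          rw [Real.sqrt_mul (sq_nonneg c), Real.sqrt_sq hc]
  -- algebraic identity
  have hPinvP : P⁻¹ * P = 1 := Matrix.nonsing_inv_mul _ hP.det_pos.ne'.isUnit
  have hQQinv : Q * Q⁻¹ = 1 := Matrix.mul_nonsing_inv _ hQ.det_pos.ne'.isUnit
  have hid : (P - P⁻¹) - (Q - Q⁻¹) = A + M := by
    have h1 : M = Q⁻¹ - P⁻¹ := by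
      rw [hMdef, hAdef, Matrix.mul_sub, hPinvP, Matrix.sub_mul, Matrix.one_mul,
        Matrix.mul_assoc, hQQinv, Matrix.mul_one]
    rw [h1, hAdef]
    abel
  rw [hid]
  have htri := GradLipAux.frobNorm_add_le A M
  have hd1 : (1:ℝ) ≤ Real.sqrt d := by
    rw [show (1:ℝ) = Real.sqrt 1 by simp]
    exact Real.sqrt_le_sqrt (by exact_mod_cast hd)
  have hcle : c ≤ Real.sqrt d / C ^ 2 := by
    have : Real.sqrt d / C ^ 2 = Real.sqrt d * c := by
      rw [hcdef, inv_pow, div_eq_mul_inv]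
    rw [this]
    nlinarith
  calc frobNorm (A + M) ≤ frobNorm A + frobNorm M := htri
    _ ≤ frobNorm A + c * frobNorm A :=
        add_le_add_right hfM _
    _ = (1 + c) * frobNorm A := by ring
    _ ≤ (1 + Real.sqrt d / C ^ 2) * frobNorm A := by
        have := GradLipAux.frobNorm_nonneg A
        nlinarith
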